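/- Let X be a chain and let α, β be orientation-preserving full transformations of X. Then α and β are D-related in the monoid OP(X) (i.e. there exists γ ∈ OP(X) such that α R γ and γ L β, where α R γ means ∃ δ, ε ∈ OP(X) with α = γδ and γ = αε, and γ L β means ∃ δ, ε ∈ OP(X) with γ = δβ and β = εγ, composition written left-to-right with the left factor applied first) if and only if there exists a bijection θ : Im(α) → Im(β) that is bicompletable in OP(X). -/

import Mathlib

variable {X : Type*}

/-- The full transformation `f` is order-preserving on the subset `A`. -/
def OrdOn [LinearOrder X] (f : X → X) (A : Set X) : Prop :=
  ∀ ⦃x y : X⦄, x ∈ A → y ∈ A → x ≤ y → f x ≤ f y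

/-- `Y` is an ideal of the full transformation `f`. -/
def IsIdealFull [LinearOrder X] (f : X → X) (Y : Set X) : Prop :=
  Y.Nonempty ∧ OrdOn f Y ∧ OrdOn f Yᶜ ∧
    ∀ ⦃a b : X⦄, a ∈ Y → b ∈ Yᶜ → a ≤ b ∧ f b ≤ f a

/-- `f` is an orientation-preserving full transformation. -/
def IsOPFull [LinearOrder X] (f : X → X) : Prop := ∃ Y : Set X, IsIdealFull f Y

section Aux
variable [LinearOrder X]

/-- Ideals are lower sets. -/
lemma idealLower {f : X → X} {Y : Set X} (h : IsIdealFull f Y)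
    {z w : X} (hz : z ∈ Y) (hw : w ≤ z) : w ∈ Y := by
  by_contra hwc
  have := (h.2.2.2 hz hwc).1
  have : w = z := le_antisymm hw this
  exact hwc (this ▸ hz)

lemma isOPFull_comp {f g : X → X} (hf : IsOPFull f) (hg : IsOPFull g) :
    IsOPFull (g ∘ f) := by
  classical
  obtain ⟨Y, hYne, hfY, hfYc, hfcr⟩ := hf
  obtain ⟨Z, hZne, hgZ, hgZc, hgcr⟩ := hg
  have hYf : IsIdealFull f Y := ⟨hYne, hfY, hfYc, hfcr⟩
  have hZg : IsIdealFull g Z := ⟨hZne, hgZ, hgZc, hgcr⟩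
  -- A-D exclusion
  have hAD : ∀ a, a ∈ Y → f a ∈ Z → ∀ d, d ∉ Y → f d ∉ Z → False := by
    intro a ha hfa d hd hfd
    have h1 : f d ≤ f a := (hfcr ha hd).2
    have h2 : f a ≤ f d := (hgcr hfa hfd).1
    exact hfd (le_antisymm h1 h2 ▸ hfa)
  by_cases hA : ∃ a, a ∈ Y ∧ f a ∈ Z
  · obtain ⟨a₀, ha₀, hfa₀⟩ := hA
    refine ⟨{x | x ∈ Y ∧ f x ∈ Z}, ⟨a₀, ha₀, hfa₀⟩, ?_, ?_, ?_⟩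
    · intro x y hx hy hxy
      exact hgZ hx.2 hy.2 (hfY hx.1 hy.1 hxy)
    · intro x y hx hy hxy
      simp only [Set.mem_compl_iff, Set.mem_setOf_eq, not_and] at hx hy
      by_cases hxY : x ∈ Y
      · have hfx : f x ∉ Z := hx hxY
        by_cases hyY : y ∈ Y
        · exact hgZc (hx hxY) (hy hyY) (hfY hxY hyY hxy)
        · by_cases hfy : f y ∈ Z
          · exact (hgcr hfy hfx).2
          · exact absurd (hAD a₀ ha₀ hfa₀ y hyY hfy) (fun h => h.elim)
      · -- x ∉ Y
        by_cases hfx : f x ∈ Z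
        · by_cases hyY : y ∈ Y
          · have : y ≤ x := (hfcr hyY hxY).1
            have hxey : x = y := le_antisymm hxy this
            exact absurd (hxey ▸ hyY) hxY
          · by_cases hfy : f y ∈ Z
            · exact hgZ hfx hfy (hfYc hxY hyY hxy)
            · exact absurd (hAD a₀ ha₀ hfa₀ y hyY hfy) (fun h => h.elim)
        · exact absurd (hAD a₀ ha₀ hfa₀ x hxY hfx) (fun h => h.elim)
    · intro a b ha hb
      simp only [Set.mem_setOf_eq] at ha
      simp only [Set.mem_compl_iff, Set.mem_setOf_eq, not_and] at hb
      by_cases hbY : b ∈ Y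
      · have hfb : f b ∉ Z := hb hbY
        constructor
        · by_contra hab
          push_neg at hab
          have : f b ≤ f a := hfY hbY ha.1 hab.le
          exact hfb (idealLower hZg ha.2 this)
        · exact (hgcr ha.2 hfb).2
      · by_cases hfb : f b ∈ Z
        · exact ⟨(hfcr ha.1 hbY).1, hgZ hfb ha.2 (hfcr ha.1 hbY).2⟩
        · exact absurd (hAD a ha.1 ha.2 b hbY hfb) (fun h => h.elim)
  · push_neg at hA
    obtain ⟨y₀, hy₀⟩ := hYne
    refine ⟨{x | x ∈ Y ∨ f x ∈ Z}, ⟨y₀, Or.inl hy₀⟩, ?_, ?_, ?_⟩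
    · intro x y hx hy hxy
      rcases hx with hxY | hfx
      · have hfx : f x ∉ Z := hA x hxY
        rcases hy with hyY | hfy
        · exact hgZc hfx (hA y hyY) (hfY hxY hyY hxy)
        · exact (hgcr hfy hfx).2
      · rcases hy with hyY | hfy
        · by_cases hxY : x ∈ Y
          · exact hgZc (hA x hxY) (hA y hyY) (hfY hxY hyY hxy)
          · have : y ≤ x := (hfcr hyY hxY).1
            have hxey : x = y := le_antisymm hxy this
            exact absurd (hA y hyY) (hxey ▸ fun h => h hfx)
        · by_cases hxY : x ∈ Y
          · exact absurd hfx (hA x hxY)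
          · by_cases hyY : y ∈ Y
            · exact absurd hfy (hA y hyY)
            · exact hgZ hfx hfy (hfYc hxY hyY hxy)
    · intro x y hx hy hxy
      simp only [Set.mem_compl_iff, Set.mem_setOf_eq, not_or] at hx hy
      exact hgZc hx.2 hy.2 (hfYc hx.1 hy.1 hxy)
    · intro w d hw hd
      simp only [Set.mem_setOf_eq] at hw
      simp only [Set.mem_compl_iff, Set.mem_setOf_eq, not_or] at hd
      rcases hw with hwY | hfw
      · exact ⟨(hfcr hwY hd.1).1, hgZc hd.2 (hA w hwY) (hfcr hwY hd.1).2⟩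
      · constructor
        · by_contra hc
          push_neg at hc
          by_cases hwY : w ∈ Y
          · exact absurd hfw (hA w hwY)
          · have : f d ≤ f w := hfYc hd.1 hwY hc.le
            exact hd.2 (idealLower hZg hfw this)
        · exact (hgcr hfw hd.2).2


/-- If `range g ⊆ range f` with both OP, then `g` factors as `f ∘ p` with `p` OP. -/
lemma factor_right {f g : X → X} (hf : IsOPFull f) (hg : IsOPFull g)
    (hr : Set.range g ⊆ Set.range f) : ∃ p : X → X, IsOPFull p ∧ f ∘ p = g := by
  classical
  obtain ⟨Z, hZne, hfZ, hfZc, hfcr⟩ := hf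
  obtain ⟨U, hUne, hgU, hgUc, hgcr⟩ := hg
  have hZf : IsIdealFull f Z := ⟨hZne, hfZ, hfZc, hfcr⟩
  obtain ⟨u₀, hu₀⟩ := hUne
  -- section of f preferring Z
  set s : X → X := fun v =>
    if h : ∃ z, z ∈ Z ∧ f z = v then h.choose
    else if h' : ∃ z, f z = v then h'.choose else u₀ with hs_def
  set p : X → X := fun x => s (g x) with hp_def
  -- T x : the value g x is attained by f inside Z
  set T : X → Prop := fun x => ∃ z, z ∈ Z ∧ f z = g x with hT_def
  have hfp : ∀ x, f (p x) = g x := by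
    intro x
    by_cases h : ∃ z, z ∈ Z ∧ f z = g x
    · simp only [hp_def, hs_def, dif_pos h]; exact h.choose_spec.2
    · have h' : ∃ z, f z = g x := hr ⟨x, rfl⟩
      simp only [hp_def, hs_def, dif_neg h, dif_pos h']; exact h'.choose_spec
  have hpZ : ∀ x, p x ∈ Z ↔ T x := by
    intro x
    constructor
    · intro hx
      exact ⟨p x, hx, hfp x⟩
    · intro h
      have h2 : ∃ z, z ∈ Z ∧ f z = g x := h
      simp only [hp_def, hs_def, dif_pos h2]; exact h2.choose_spec.1
  have hpeq : ∀ x y, g x = g y → p x = p y := by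
    intro x y h; simp only [hp_def, h]
  -- monotone engine
  have M : ∀ x y, g x ≤ g y → ((p x ∈ Z ∧ p y ∈ Z) ∨ (p x ∉ Z ∧ p y ∉ Z)) →
      p x ≤ p y := by
    intro x y hxy hcl
    by_contra hc
    push_neg at hc
    have hle : f (p y) ≤ f (p x) := by
      rcases hcl with ⟨h1, h2⟩ | ⟨h1, h2⟩
      · exact hfZ h2 h1 hc.le
      · exact hfZc h2 h1 hc.le
    rw [hfp, hfp] at hle
    have : g x = g y := le_antisymm hxy hle
    exact absurd (hpeq x y this) (ne_of_gt hc)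
  -- T-vs-not-T value comparison: if T x and ¬ T y then g y ≤ g x
  have hTval : ∀ x y, T x → ¬ T y → g y ≤ g x := by
    intro x y hx hy
    obtain ⟨z, hz, hfz⟩ := hx
    obtain ⟨w, hfw⟩ := hr (⟨y, rfl⟩ : g y ∈ Set.range g)
    have hwZ : w ∉ Z := fun h => hy ⟨w, h, hfw⟩
    calc g y = f w := hfw.symm
    _ ≤ f z := (hfcr hz hwZ).2
    _ = g x := hfz
  -- B,C exclusion
  have hBC : ∀ b, b ∈ U → ¬ T b → ∀ c, c ∉ U → T c → False := by
    intro b hb hTb c hc hTc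
    have h1 : g c ≤ g b := (hgcr hb hc).2
    have h2 : g b ≤ g c := hTval c b hTc hTb
    have : g b = g c := le_antisymm h2 h1
    exact hTb (by rw [hT_def]; simp only; rw [this]; exact hTc)
  -- ordering B < A
  have hordBA : ∀ b, b ∈ U → ¬ T b → ∀ a, a ∈ U → T a → b ≤ a := by
    intro b hb hTb a ha hTa
    by_contra hc
    push_neg at hc
    have h1 : g a ≤ g b := hgU ha hb hc.le
    have h2 : g b ≤ g a := hTval a b hTa hTb
    have : g a = g b := le_antisymm h1 h2
    exact hTb (by rw [hT_def]; simp only; rw [← this]; exact hTa)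
  have hordDC : ∀ d, d ∉ U → ¬ T d → ∀ c, c ∉ U → T c → d ≤ c := by
    intro d hd hTd c hc hTc
    by_contra hcon
    push_neg at hcon
    have h1 : g c ≤ g d := hgUc hc hd hcon.le
    have h2 : g d ≤ g c := hTval c d hTc hTd
    have : g c = g d := le_antisymm h1 h2
    exact hTd (by rw [hT_def]; simp only; rw [← this]; exact hTc)
  refine ⟨p, ?_, funext hfp⟩
  by_cases hB : ∃ b, b ∈ U ∧ ¬ T b
  · -- W = B
    obtain ⟨b₀, hb₀, hTb₀⟩ := hB
    have hC : ∀ c, c ∉ U → ¬ T c := fun c hc hTc => hBC b₀ hb₀ hTb₀ c hc hTc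
    refine ⟨{x | x ∈ U ∧ ¬ T x}, ⟨b₀, hb₀, hTb₀⟩, ?_, ?_, ?_⟩
    · intro x y hx hy hxy
      exact M x y (hgU hx.1 hy.1 hxy) (Or.inr ⟨fun h => hx.2 ((hpZ x).1 h),
        fun h => hy.2 ((hpZ y).1 h)⟩)
    · intro x y hx hy hxy
      simp only [Set.mem_compl_iff, Set.mem_setOf_eq, not_and, not_not] at hx hy
      by_cases hxU : x ∈ U
      · have hTx : T x := hx hxU
        by_cases hyU : y ∈ U
        · exact M x y (hgU hxU hyU hxy) (Or.inl ⟨(hpZ x).2 hTx, (hpZ y).2 (hy hyU)⟩)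
        · -- y ∈ D (since C excluded)
          have hTy : ¬ T y := hC y hyU
          exact (hfcr ((hpZ x).2 hTx) (fun h => hTy ((hpZ y).1 h))).1
      · have hTx : ¬ T x := hC x hxU
        by_cases hyU : y ∈ U
        · have : y ≤ x := (hgcr hyU hxU).1
          have hxey : x = y := le_antisymm hxy this
          exact absurd (hxey ▸ hyU) hxU
        · exact M x y (hgUc hxU hyU hxy)
            (Or.inr ⟨fun h => hTx ((hpZ x).1 h), fun h => (hC y hyU) ((hpZ y).1 h)⟩)
    · intro w v hw hv
      simp only [Set.mem_setOf_eq] at hw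
      simp only [Set.mem_compl_iff, Set.mem_setOf_eq, not_and, not_not] at hv
      by_cases hvU : v ∈ U
      · have hTv : T v := hv hvU
        exact ⟨hordBA w hw.1 hw.2 v hvU hTv,
          (hfcr ((hpZ v).2 hTv) (fun h => hw.2 ((hpZ w).1 h))).1⟩
      · have hTv : ¬ T v := hC v hvU
        refine ⟨(hgcr hw.1 hvU).1, ?_⟩
        exact M v w ((hgcr hw.1 hvU).2)
          (Or.inr ⟨fun h => hTv ((hpZ v).1 h), fun h => hw.2 ((hpZ w).1 h)⟩)
  · -- B empty : every x ∈ U has T x. W = U ∪ D = {x | x ∈ U ∨ ¬ T x}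
    push_neg at hB
    refine ⟨{x | x ∈ U ∨ ¬ T x}, ⟨u₀, Or.inl hu₀⟩, ?_, ?_, ?_⟩
    · intro x y hx hy hxy
      rcases hx with hxU | hTx
      · have hTx : T x := hB x hxU
        rcases hy with hyU | hTy
        · exact M x y (hgU hxU hyU hxy) (Or.inl ⟨(hpZ x).2 hTx, (hpZ y).2 (hB y hyU)⟩)
        · exact (hfcr ((hpZ x).2 hTx) (fun h => hTy ((hpZ y).1 h))).1
      · rcases hy with hyU | hTy
        · by_cases hxU : x ∈ U
          · exact M x y (hgU hxU hyU hxy)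
              (Or.inl ⟨(hpZ x).2 (hB x hxU), (hpZ y).2 (hB y hyU)⟩)
          · have : y ≤ x := (hgcr hyU hxU).1
            have hxey : x = y := le_antisymm hxy this
            exact absurd (hxey ▸ hyU) hxU
        · by_cases hxU : x ∈ U
          · exact absurd (hB x hxU) hTx
          · by_cases hyU : y ∈ U
            · exact absurd (hB y hyU) hTy
            · exact M x y (hgUc hxU hyU hxy)
                (Or.inr ⟨fun h => hTx ((hpZ x).1 h), fun h => hTy ((hpZ y).1 h)⟩)
    · intro x y hx hy hxy
      simp only [Set.mem_compl_iff, Set.mem_setOf_eq, not_or, not_not] at hx hy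
      exact M x y (hgUc hx.1 hy.1 hxy) (Or.inl ⟨(hpZ x).2 hx.2, (hpZ y).2 hy.2⟩)
    · intro w c hw hc
      simp only [Set.mem_setOf_eq] at hw
      simp only [Set.mem_compl_iff, Set.mem_setOf_eq, not_or, not_not] at hc
      rcases hw with hwU | hTw
      · refine ⟨(hgcr hwU hc.1).1, ?_⟩
        exact M c w ((hgcr hwU hc.1).2)
          (Or.inl ⟨(hpZ c).2 hc.2, (hpZ w).2 (hB w hwU)⟩)
      · refine ⟨hordDC w (fun h => hTw (hB w h)) hTw c hc.1 hc.2, ?_⟩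
        · exact (hfcr ((hpZ c).2 hc.2) (fun h => hTw ((hpZ w).1 h))).1

end Aux

/-- Green's relation `D` in `OP(X)`: `α D β` iff there is a bijection
`θ : Im α → Im β` that is bicompletable in `OP(X)`. -/
theorem stmt13 (X : Type*) [LinearOrder X] (α β : X → X)
    (hα : IsOPFull α) (hβ : IsOPFull β) :
    (∃ γ : X → X, IsOPFull γ ∧
      (∃ δ ε : X → X, IsOPFull δ ∧ IsOPFull ε ∧ α = δ ∘ γ ∧ γ = ε ∘ α) ∧
      (∃ δ ε : X → X, IsOPFull δ ∧ IsOPFull ε ∧ γ = β ∘ δ ∧ β = γ ∘ ε)) ↔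
    (∃ θ : X → X, Set.BijOn θ (Set.range α) (Set.range β) ∧
      (∃ γ : X → X, IsOPFull γ ∧ ∀ a ∈ Set.range α, γ a = θ a) ∧
      (∃ δ : X → X, IsOPFull δ ∧ ∀ a ∈ Set.range α, δ (θ a) = a)) := by
  constructor
  · rintro ⟨μ, hμ, ⟨δ, ε, hδ, hε, hαδμ, hμεα⟩, ⟨δ', ε', hδ', hε', hμβδ', hβμε'⟩⟩
    refine ⟨ε, ⟨?_, ?_, ?_⟩, ⟨ε, hε, fun a _ => rfl⟩, ⟨δ, hδ, ?_⟩⟩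
    · rintro _ ⟨x, rfl⟩
      have h1 : ε (α x) = μ x := (congrFun hμεα x).symm
      have h2 : μ x = β (δ' x) := congrFun hμβδ' x
      exact ⟨δ' x, (h1.trans h2).symm⟩
    · rintro _ ⟨x, rfl⟩ _ ⟨y, rfl⟩ h
      have hx : ε (α x) = μ x := (congrFun hμεα x).symm
      have hy : ε (α y) = μ y := (congrFun hμεα y).symm
      rw [hx, hy] at h
      calc α x = δ (μ x) := congrFun hαδμ x
      _ = δ (μ y) := by rw [h]
      _ = α y := (congrFun hαδμ y).symm
    · rintro _ ⟨x, rfl⟩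
      refine ⟨α (ε' x), ⟨ε' x, rfl⟩, ?_⟩
      calc ε (α (ε' x)) = μ (ε' x) := (congrFun hμεα (ε' x)).symm
      _ = β x := (congrFun hβμε' x).symm
    · rintro _ ⟨x, rfl⟩
      calc δ (ε (α x)) = δ (μ x) := by rw [show ε (α x) = μ x from (congrFun hμεα x).symm]
      _ = α x := (congrFun hαδμ x).symm
  · rintro ⟨θ, hbij, ⟨γ, hγ, hγθ⟩, ⟨δ, hδ, hδθ⟩⟩
    set μ : X → X := γ ∘ α with hμdef
    have hμ : IsOPFull μ := isOPFull_comp hα hγ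
    have hμθ : ∀ x, μ x = θ (α x) := fun x => hγθ (α x) ⟨x, rfl⟩
    have hrμβ : Set.range μ ⊆ Set.range β := by
      rintro _ ⟨x, rfl⟩
      rw [hμθ x]
      exact hbij.mapsTo ⟨x, rfl⟩
    have hrβμ : Set.range β ⊆ Set.range μ := by
      rintro _ ⟨x, rfl⟩
      obtain ⟨a, ⟨w, rfl⟩, ha⟩ := hbij.surjOn ⟨x, rfl⟩
      exact ⟨w, by rw [hμθ w, ha]⟩
    obtain ⟨p, hp, hβp⟩ := factor_right hβ hμ hrμβ
    obtain ⟨q, hq, hμq⟩ := factor_right hμ hβ hrβμ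
    refine ⟨μ, hμ, ⟨δ, γ, hδ, hγ, ?_, rfl⟩, ⟨p, q, hp, hq, hβp.symm, hμq.symm⟩⟩
    funext x
    calc α x = δ (θ (α x)) := (hδθ (α x) ⟨x, rfl⟩).symm
    _ = δ (μ x) := by rw [hμθ x]
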